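/- arXiv:2202.06187 — 3 statements merged into one kernel-verified Lean document; each statement's English description precedes it below -/
import Mathlib

section
/- Let E be a real inner product space, m, K, Q positive natural numbers, λ : Fin m → ℝ strictly positive weights, and U ≥ 0. Consider sequences r : ℕ → Fin m → Fin K (assignments), Ω : ℕ → Fin K → E (centroids), ω : ℕ → Fin m → E (client parameters), and per-round learning rates η : ℕ → Fin m → ℝ with η t i ≥ 0, satisfying for every round t: (E-step) for all i and k, ‖ω t i − Ω t (r (t+1) i)‖ ≤ ‖ω t i − Ω t k‖; (M-step) every cluster is nonempty under r (t+1), and Ω (t+1) k is the λ-weighted mean of {ω t i : r (t+1) i = k}; (Local step) for each i there exist vectors g_{i,0}, …, g_{i,Q−1} ∈ E with ‖g_{i,q}‖ ≤ U such that ω (t+1) i = Ω (t+1) (r (t+1) i) − (η t i) • ∑_{q<Q} g_{i,q}, and the learning rate satisfies η t i · Q · U ≤ ‖ω t i − Ω (t+1) (r (t+1) i)‖. Define F t := (∑_j λ j)⁻¹ · ∑_i λ i · ‖ω t i − Ω t (r t i)‖². Then F is nonincreasing (F (t+1) ≤ F t for all t), and F converges: there exists c ≥ 0 such that F t tends to c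 as t → ∞. -/
open Finset

/-- The weighted mean minimizes the weighted sum of squared distances. -/
lemma wecfl_weighted_mean_min {E : Type*} [NormedAddCommGroup E] [InnerProductSpace ℝ E]
    {ι : Type*} (s : Finset ι) (w : ι → ℝ) (hw : ∀ i ∈ s, 0 < w i) (hs : s.Nonempty)
    (x : ι → E) (c : E) :
    ∑ i ∈ s, w i * ‖x i - (∑ i ∈ s, w i)⁻¹ • ∑ i ∈ s, w i • x i‖ ^ 2
      ≤ ∑ i ∈ s, w i * ‖x i - c‖ ^ 2 := by
  set W := ∑ i ∈ s, w i with hW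
  have hWpos : 0 < W := Finset.sum_pos hw hs
  set μ := W⁻¹ • ∑ i ∈ s, w i • x i with hμ
  have hzero : ∑ i ∈ s, w i • (x i - μ) = 0 := by
    simp only [smul_sub, Finset.sum_sub_distrib]
    rw [← Finset.sum_smul, ← hW, hμ, smul_smul, mul_inv_cancel₀ hWpos.ne', one_smul, sub_self]
  have key : ∀ i ∈ s, ‖x i - c‖ ^ 2
      = ‖x i - μ‖ ^ 2 + 2 * (inner ℝ (x i - μ) (μ - c) : ℝ) + ‖μ - c‖ ^ 2 := by
    intro i _
    have h : x i - c = (x i - μ) + (μ - c) := by abel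
    rw [h, norm_add_sq_real]
  have h1 : ∑ i ∈ s, w i * (inner ℝ (x i - μ) (μ - c) : ℝ) = 0 := by
    have h2 : ∑ i ∈ s, w i * (inner ℝ (x i - μ) (μ - c) : ℝ)
        = inner ℝ (∑ i ∈ s, w i • (x i - μ)) (μ - c) := by
      rw [sum_inner]
      exact Finset.sum_congr rfl fun i _ => (real_inner_smul_left _ _ _).symm
    rw [h2, hzero, inner_zero_left]
  have expand : ∑ i ∈ s, w i * ‖x i - c‖ ^ 2
      = (∑ i ∈ s, w i * ‖x i - μ‖ ^ 2)
        + 2 * (∑ i ∈ s, w i * (inner ℝ (x i - μ) (μ - c) : ℝ))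
        + W * ‖μ - c‖ ^ 2 := by
    rw [hW, Finset.sum_mul, Finset.mul_sum, ← Finset.sum_add_distrib, ← Finset.sum_add_distrib]
    exact Finset.sum_congr rfl fun i hi => by rw [key i hi]; ring
  rw [expand, h1]
  nlinarith [mul_nonneg hWpos.le (sq_nonneg ‖μ - c‖)]

/-- Theorem 1 of the paper: convergence of the weighted clustering objective F
of WeCFL.  Under the E-step (nearest-centroid assignment), M-step (weighted-mean
aggregation) and local update step with bounded gradients and learning rate
η t i ≤ ‖ω t i − Ω_k‖/(Q U), the objective F is nonincreasing and converges. -/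
theorem wecfl_clustering_objective_converges
    {E : Type*} [NormedAddCommGroup E] [InnerProductSpace ℝ E]
    {m K Q : ℕ} (hm : 0 < m) (hK : 0 < K) (hQ : 0 < Q)
    (lam : Fin m → ℝ) (hlam : ∀ i, 0 < lam i)
    (U : ℝ) (hU : 0 ≤ U)
    (r : ℕ → Fin m → Fin K) (Ω : ℕ → Fin K → E) (ω : ℕ → Fin m → E)
    (η : ℕ → Fin m → ℝ) (hη : ∀ t i, 0 ≤ η t i)
    -- Expectation step: each client is assigned to a nearest centroid
    (hE : ∀ t (i : Fin m) (k : Fin K),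
      ‖ω t i - Ω t (r (t + 1) i)‖ ≤ ‖ω t i - Ω t k‖)
    -- Maximization step: every cluster is nonempty ...
    (hMne : ∀ t (k : Fin K), ∃ i : Fin m, r (t + 1) i = k)
    -- ... and the new centroid is the λ-weighted mean of its clients
    (hM : ∀ t (k : Fin K), Ω (t + 1) k =
      (∑ i ∈ Finset.univ.filter (fun i => r (t + 1) i = k), lam i)⁻¹ •
        ∑ i ∈ Finset.univ.filter (fun i => r (t + 1) i = k), lam i • ω t i)
    -- Local update step: Q bounded-gradient steps from the centroid, with
    -- learning rate η t i · Q · U ≤ ‖ω t i − Ω (t+1) (r (t+1) i)‖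
    (hL : ∀ t (i : Fin m), ∃ g : Fin Q → E, (∀ q, ‖g q‖ ≤ U) ∧
      ω (t + 1) i = Ω (t + 1) (r (t + 1) i) - η t i • ∑ q, g q ∧
      η t i * Q * U ≤ ‖ω t i - Ω (t + 1) (r (t + 1) i)‖)
    (F : ℕ → ℝ)
    (hF : ∀ t, F t = (∑ j, lam j)⁻¹ * ∑ i, lam i * ‖ω t i - Ω t (r t i)‖ ^ 2) :
    (∀ t, F (t + 1) ≤ F t) ∧
      ∃ c : ℝ, 0 ≤ c ∧ Filter.Tendsto F Filter.atTop (nhds c) := by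
  have hSpos : 0 < ∑ j, lam j :=
    Finset.sum_pos (fun i _ => hlam i) (Finset.univ_nonempty_iff.2 ⟨⟨0, hm⟩⟩)
  have hSinv : 0 ≤ (∑ j, lam j)⁻¹ := inv_nonneg.2 hSpos.le
  -- F is nonneg
  have hFnonneg : ∀ t, 0 ≤ F t := by
    intro t
    rw [hF t]
    exact mul_nonneg hSinv (Finset.sum_nonneg fun i _ =>
      mul_nonneg (hlam i).le (sq_nonneg _))
  -- monotone step
  have hstep : ∀ t, F (t + 1) ≤ F t := by
    intro t
    rw [hF t, hF (t + 1)]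
    apply mul_le_mul_of_nonneg_left _ hSinv
    -- Step 1: local update keeps client within old distance to its (new) centroid
    have step1 : ∑ i, lam i * ‖ω (t + 1) i - Ω (t + 1) (r (t + 1) i)‖ ^ 2
        ≤ ∑ i, lam i * ‖ω t i - Ω (t + 1) (r (t + 1) i)‖ ^ 2 := by
      apply Finset.sum_le_sum
      intro i _
      obtain ⟨g, hg, heq, hlr⟩ := hL t i
      have hnorm : ‖ω (t + 1) i - Ω (t + 1) (r (t + 1) i)‖
          ≤ ‖ω t i - Ω (t + 1) (r (t + 1) i)‖ := by
        rw [heq]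
        have h1 : ‖Ω (t + 1) (r (t + 1) i) - η t i • ∑ q, g q - Ω (t + 1) (r (t + 1) i)‖
            = η t i * ‖∑ q, g q‖ := by
          rw [sub_sub_cancel_left, norm_neg, norm_smul, Real.norm_eq_abs,
            abs_of_nonneg (hη t i)]
        rw [h1]
        have h2 : ‖∑ q, g q‖ ≤ (Q : ℝ) * U := by
          calc ‖∑ q, g q‖ ≤ ∑ q, ‖g q‖ := norm_sum_le _ _
            _ ≤ ∑ _q : Fin Q, U := Finset.sum_le_sum fun q _ => hg q
            _ = (Q : ℝ) * U := by simp [mul_comm]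
        calc η t i * ‖∑ q, g q‖ ≤ η t i * ((Q : ℝ) * U) :=
              mul_le_mul_of_nonneg_left h2 (hη t i)
          _ = η t i * Q * U := by ring
          _ ≤ ‖ω t i - Ω (t + 1) (r (t + 1) i)‖ := hlr
      exact mul_le_mul_of_nonneg_left
        (pow_le_pow_left₀ (norm_nonneg _) hnorm 2) (hlam i).le
    -- Step 2: M-step (weighted mean minimizes within-cluster objective)
    have step2 : ∑ i, lam i * ‖ω t i - Ω (t + 1) (r (t + 1) i)‖ ^ 2
        ≤ ∑ i, lam i * ‖ω t i - Ω t (r (t + 1) i)‖ ^ 2 := by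
      rw [← Finset.sum_fiberwise Finset.univ (fun i => r (t + 1) i)
            (fun i => lam i * ‖ω t i - Ω (t + 1) (r (t + 1) i)‖ ^ 2),
          ← Finset.sum_fiberwise Finset.univ (fun i => r (t + 1) i)
            (fun i => lam i * ‖ω t i - Ω t (r (t + 1) i)‖ ^ 2)]
      apply Finset.sum_le_sum
      intro k _
      have hmem : ∀ i ∈ Finset.univ.filter (fun i => r (t + 1) i = k),
          r (t + 1) i = k := fun i hi => (Finset.mem_filter.1 hi).2
      have eL : ∑ i ∈ Finset.univ.filter (fun i => r (t + 1) i = k),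
            lam i * ‖ω t i - Ω (t + 1) (r (t + 1) i)‖ ^ 2
          = ∑ i ∈ Finset.univ.filter (fun i => r (t + 1) i = k),
            lam i * ‖ω t i - Ω (t + 1) k‖ ^ 2 :=
        Finset.sum_congr rfl fun i hi => by rw [hmem i hi]
      have eR : ∑ i ∈ Finset.univ.filter (fun i => r (t + 1) i = k),
            lam i * ‖ω t i - Ω t (r (t + 1) i)‖ ^ 2
          = ∑ i ∈ Finset.univ.filter (fun i => r (t + 1) i = k),
            lam i * ‖ω t i - Ω t k‖ ^ 2 :=
        Finset.sum_congr rfl fun i hi => by rw [hmem i hi]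
      rw [eL, eR]
      obtain ⟨i0, hi0⟩ := hMne t k
      have hne : (Finset.univ.filter (fun i => r (t + 1) i = k)).Nonempty :=
        ⟨i0, Finset.mem_filter.2 ⟨Finset.mem_univ _, hi0⟩⟩
      rw [hM t k]
      exact wecfl_weighted_mean_min _ lam (fun i _ => hlam i) hne (ω t) (Ω t k)
    -- Step 3: E-step
    have step3 : ∑ i, lam i * ‖ω t i - Ω t (r (t + 1) i)‖ ^ 2
        ≤ ∑ i, lam i * ‖ω t i - Ω t (r t i)‖ ^ 2 := by
      apply Finset.sum_le_sum
      intro i _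
      exact mul_le_mul_of_nonneg_left
        (pow_le_pow_left₀ (norm_nonneg _) (hE t i (r t i)) 2) (hlam i).le
    exact le_trans step1 (le_trans step2 step3)
  refine ⟨hstep, ⨅ t, F t, le_ciInf hFnonneg, ?_⟩
  exact tendsto_atTop_ciInf (antitone_nat_of_succ_le hstep)
    ⟨0, fun x ⟨t, ht⟩ => ht ▸ hFnonneg t⟩
end

section
/- Let E be a real inner product space, m and Q positive natural numbers, λ : Fin m → ℝ strictly positive weights, Ω ∈ E, η ≥ 0, B ≥ 0, U ≥ 0, and g : Fin m → Fin Q → E vectors with ‖g i q‖ ≤ U for all i, q. For each i set ω i := Ω − η • ∑_{q<Q} g i q, and for each q let ḡ q := (∑_j λ j)⁻¹ • ∑_p λ p • g p q be the weighted average update direction at step q. Assume the clusterability condition: for all i and q, ‖ḡ q − g i q‖ ≤ B · ‖ḡ q‖. Let μ := (∑_j λ j)⁻¹ • ∑_i λ i • ω i be the weighted mean of the updated client parameters. Then for every i, ‖μ − ω i‖ ≤ η · B · Q · U. -/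
/-- Key distance bound inside Lemma 4 of WeCFL: under the clusterability
condition with measure B, each client's locally updated parameter is within
η·B·Q·U of the cluster's weighted mean. -/
theorem wecfl_clusterability_distance_bound
    {E : Type*} [NormedAddCommGroup E] [InnerProductSpace ℝ E]
    {m Q : ℕ} (hm : 0 < m) (hQ : 0 < Q)
    (lam : Fin m → ℝ) (hlam : ∀ i, 0 < lam i)
    (Ω : E) (η B U : ℝ) (hη : 0 ≤ η) (hB : 0 ≤ B) (hU : 0 ≤ U)
    (g : Fin m → Fin Q → E) (hg : ∀ i q, ‖g i q‖ ≤ U)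
    (ω : Fin m → E) (hω : ∀ i, ω i = Ω - η • ∑ q, g i q)
    (gbar : Fin Q → E)
    (hgbar : ∀ q, gbar q = (∑ j, lam j)⁻¹ • ∑ p, lam p • g p q)
    (hclu : ∀ i q, ‖gbar q - g i q‖ ≤ B * ‖gbar q‖)
    (μ : E) (hμ : μ = (∑ j, lam j)⁻¹ • ∑ i, lam i • ω i) :
    ∀ i, ‖μ - ω i‖ ≤ η * B * Q * U := by
  intro i
  set S : ℝ := ∑ j, lam j with hS
  have hSpos : 0 < S := Finset.sum_pos (fun j _ => hlam j) ⟨⟨0, hm⟩, Finset.mem_univ _⟩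
  have hSne : S ≠ 0 := ne_of_gt hSpos
  -- gbar norm bound
  have hgbarU : ∀ q, ‖gbar q‖ ≤ U := by
    intro q
    rw [hgbar q]
    calc ‖S⁻¹ • ∑ p, lam p • g p q‖ = S⁻¹ * ‖∑ p, lam p • g p q‖ := by
          rw [norm_smul, Real.norm_eq_abs, abs_of_nonneg (inv_nonneg.2 hSpos.le)]
      _ ≤ S⁻¹ * ∑ p, lam p * U := by
          refine mul_le_mul_of_nonneg_left ?_ (inv_nonneg.2 hSpos.le)
          refine (norm_sum_le _ _).trans (Finset.sum_le_sum fun p _ => ?_)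
          rw [norm_smul, Real.norm_eq_abs, abs_of_nonneg (hlam p).le]
          exact mul_le_mul_of_nonneg_left (hg p q) (hlam p).le
      _ = S⁻¹ * (S * U) := by rw [← Finset.sum_mul]
      _ = U := by field_simp
  -- μ = Ω - η • ∑ q, gbar q
  have hμ' : μ = Ω - η • ∑ q, gbar q := by
    rw [hμ]
    have h1 : ∑ j, lam j • ω j = S • Ω - η • ∑ p, lam p • ∑ q, g p q := by
      simp only [hω, smul_sub]
      rw [Finset.sum_sub_distrib, ← Finset.sum_smul, Finset.smul_sum]
      congr 1
      refine Finset.sum_congr rfl fun p _ => ?_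
      rw [smul_comm]
    have h2 : ∑ q, gbar q = S⁻¹ • ∑ p, lam p • ∑ q, g p q := by
      simp only [hgbar]
      rw [← Finset.smul_sum, Finset.sum_comm]
      congr 1
      refine Finset.sum_congr rfl fun p _ => ?_
      rw [Finset.smul_sum]
    rw [h1, h2, smul_sub, smul_smul, inv_mul_cancel₀ hSne, one_smul, smul_comm]
  have key : μ - ω i = η • ∑ q, (g i q - gbar q) := by
    rw [hμ', hω i, Finset.sum_sub_distrib, smul_sub]
    abel
  rw [key, norm_smul, Real.norm_eq_abs, abs_of_nonneg hη]
  have : ‖∑ q, (g i q - gbar q)‖ ≤ B * Q * U := by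
    calc ‖∑ q, (g i q - gbar q)‖ ≤ ∑ q : Fin Q, (B * U) := by
          refine (norm_sum_le _ _).trans (Finset.sum_le_sum fun q _ => ?_)
          rw [norm_sub_rev]
          exact (hclu i q).trans (mul_le_mul_of_nonneg_left (hgbarU q) hB)
      _ = B * Q * U := by
          simp [Finset.sum_const, Finset.card_univ]; ring
  calc η * ‖∑ q, (g i q - gbar q)‖ ≤ η * (B * Q * U) :=
        mul_le_mul_of_nonneg_left this hη
    _ = η * B * Q * U := by ring
end

section
/- Let E be a complete real inner product space, m and Q positive natural numbers, λ : Fin m → ℝ strictly positive weights, η ≥ 0, B ≥ 0, U ≥ 0, and Ω ∈ E. For each i : Fin m let f i : E → ℝ be convex and differentiable with gradient ∇f i, and assume ‖∇f i x‖ ≤ U for all x ∈ E (bounded gradients). Each client runs Q gradient descent steps from Ω: ω i 0 := Ω and ω i (q+1) := ω i q − η • ∇f i (ω i q); write ω i := ω i Q. Assume the clusterability condition holds at every local step: for all i and all q < Q, ‖ḡ q − ∇f i (ω i q)‖ ≤ B · ‖ḡ q‖, where ḡ q := (∑_j λ j)⁻¹ • ∑_p λ p • ∇f p (ω p q). Let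 μ := (∑_j λ j)⁻¹ • ∑_i λ i • ω i be the weighted mean of the updated parameters. Then (∑_j λ j)⁻¹ · ∑_i λ i · (f i (μ) − f i (ω i)) ≤ η · B · Q · U². -/
open Filter Set
open scoped Topology

lemma convex_grad_le {E : Type*} [NormedAddCommGroup E] [InnerProductSpace ℝ E]
    [CompleteSpace E]
    {f : E → ℝ} {g x : E} (hconv : ConvexOn ℝ Set.univ f)
    (hg : HasGradientAt f g x) (y : E) :
    (inner ℝ g (y - x) : ℝ) ≤ f y - f x := by
  set φ : ℝ → ℝ := fun t => f (x + t • (y - x)) with hφ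
  have hc : HasDerivAt (fun t : ℝ => x + t • (y - x)) (y - x) 0 := by
    simpa using ((hasDerivAt_id (0:ℝ)).smul_const (y - x)).const_add x
  have hd : HasDerivAt φ (inner ℝ g (y - x)) 0 := by
    have h2 : HasFDerivAt f (InnerProductSpace.toDual ℝ E g)
        ((fun t : ℝ => x + t • (y - x)) 0) := by
      simpa using hg.hasFDerivAt
    have := h2.comp_hasDerivAt 0 hc
    simp only [InnerProductSpace.toDual_apply_apply] at this
    exact this
  have key : ∀ t ∈ Set.Ioc (0:ℝ) 1, slope φ 0 t ≤ f y - f x := by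
    intro t ht
    have hcomb := hconv.2 (Set.mem_univ x) (Set.mem_univ y)
      (by linarith [ht.2] : (0:ℝ) ≤ 1 - t) (le_of_lt ht.1) (by ring)
    have hxy : x + t • (y - x) = (1 - t) • x + t • y := by
      rw [smul_sub, sub_smul, one_smul]; abel
    have hφt : φ t ≤ (1 - t) * f x + t * f y := by
      rw [hφ]; simpa [hxy, smul_eq_mul] using hcomb
    have hφ0 : φ 0 = f x := by simp [hφ]
    have hslope : slope φ 0 t = (φ t - f x) / t := by
      rw [slope_def_field, hφ0, sub_zero]
    rw [hslope, div_le_iff₀ ht.1]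
    nlinarith [hφt]
  have htend : Tendsto (slope φ 0) (𝓝[>] (0:ℝ)) (𝓝 (inner ℝ g (y - x))) :=
    (hasDerivAt_iff_tendsto_slope.mp hd).mono_left
      (nhdsWithin_mono _ (fun z hz => ne_of_gt hz))
  exact le_of_tendsto htend
    (Filter.eventually_of_mem (Ioc_mem_nhdsGT_of_mem ⟨le_refl (0:ℝ), zero_lt_one⟩) key)

/-- Lemma 4 of WeCFL: under convexity, gradients bounded by U, and the
clusterability condition with measure B at every local step, the weighted
federated loss at the aggregated (weighted mean) model exceeds the weighted
loss at the individual client models by at most η·B·Q·U². -/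
theorem wecfl_aggregation_loss_bound
    {E : Type*} [NormedAddCommGroup E] [InnerProductSpace ℝ E] [CompleteSpace E]
    {m Q : ℕ} (hm : 0 < m) (hQ : 0 < Q)
    (lam : Fin m → ℝ) (hlam : ∀ i, 0 < lam i)
    (η B U : ℝ) (hη : 0 ≤ η) (hB : 0 ≤ B) (hU : 0 ≤ U)
    (Ω : E)
    (f : Fin m → E → ℝ) (f' : Fin m → E → E)
    (hconv : ∀ i, ConvexOn ℝ Set.univ (f i))
    (hgrad : ∀ i x, HasGradientAt (f i) (f' i x) x)
    (hbdd : ∀ i x, ‖f' i x‖ ≤ U)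
    -- Q gradient descent steps from Ω for each client
    (ω : Fin m → ℕ → E)
    (hω0 : ∀ i, ω i 0 = Ω)
    (hωs : ∀ i q, ω i (q + 1) = ω i q - η • f' i (ω i q))
    -- weighted-average update direction at each step
    (gbar : ℕ → E)
    (hgbar : ∀ q, gbar q = (∑ j, lam j)⁻¹ • ∑ p, lam p • f' p (ω p q))
    -- clusterability condition at every local step
    (hclu : ∀ i : Fin m, ∀ q < Q, ‖gbar q - f' i (ω i q)‖ ≤ B * ‖gbar q‖)
    -- weighted mean of the updated parameters
    (μ : E) (hμ : μ = (∑ j, lam j)⁻¹ • ∑ i, lam i • ω i Q) :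
    (∑ j, lam j)⁻¹ * ∑ i, lam i * (f i μ - f i (ω i Q)) ≤ η * B * Q * U ^ 2 := by
  have hne : Nonempty (Fin m) := Fin.pos_iff_nonempty.mp hm
  set Λ : ℝ := ∑ j, lam j with hΛdef
  have hΛ : 0 < Λ := Finset.sum_pos (fun i _ => hlam i) Finset.univ_nonempty
  -- unrolled iterates
  have hA : ∀ i q, ω i q = Ω - η • ∑ p ∈ Finset.range q, f' i (ω i p) := by
    intro i q
    induction q with
    | zero => simp [hω0]
    | succ q ih =>
      rw [hωs i q, Finset.sum_range_succ, smul_add, ih]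
      abel
  -- gbar bounded by U
  have hgU : ∀ q, ‖gbar q‖ ≤ U := by
    intro q
    rw [hgbar q, norm_smul]
    have h1 : ‖∑ p, lam p • f' p (ω p q)‖ ≤ Λ * U := by
      calc ‖∑ p, lam p • f' p (ω p q)‖ ≤ ∑ p, ‖lam p • f' p (ω p q)‖ :=
            norm_sum_le _ _
        _ ≤ ∑ p, lam p * U := by
            refine Finset.sum_le_sum fun p _ => ?_
            rw [norm_smul, Real.norm_eq_abs, abs_of_pos (hlam p)]
            exact mul_le_mul_of_nonneg_left (hbdd p _) (hlam p).le
        _ = Λ * U := by rw [hΛdef, Finset.sum_mul]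
    have h2 : ‖(Λ⁻¹ : ℝ)‖ = Λ⁻¹ := by
      rw [Real.norm_eq_abs, abs_of_pos (inv_pos.mpr hΛ)]
    rw [h2]
    calc Λ⁻¹ * ‖∑ p, lam p • f' p (ω p q)‖ ≤ Λ⁻¹ * (Λ * U) :=
          mul_le_mul_of_nonneg_left h1 (inv_pos.mpr hΛ).le
      _ = U := by field_simp
  -- mean as descent along gbar
  have hμ' : μ = Ω - η • ∑ q ∈ Finset.range Q, gbar q := by
    rw [hμ]
    have : ∀ i : Fin m, lam i • ω i Q
        = lam i • Ω - η • ∑ p ∈ Finset.range Q, lam i • f' i (ω i p) := by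
      intro i
      rw [hA i Q, smul_sub, smul_comm (lam i) η, Finset.smul_sum]
    rw [Finset.sum_congr rfl fun i _ => this i, Finset.sum_sub_distrib,
      ← Finset.sum_smul, ← Finset.smul_sum, smul_sub, smul_smul,
      inv_mul_cancel₀ hΛ.ne', one_smul, Finset.sum_comm, smul_comm (Λ⁻¹) η,
      Finset.smul_sum]
    congr 1
    congr 1
    refine Finset.sum_congr rfl fun q _ => ?_
    rw [hgbar q]
  -- difference of mean and iterate
  have hdiff : ∀ i : Fin m,
      μ - ω i Q = η • ∑ q ∈ Finset.range Q, (f' i (ω i q) - gbar q) := by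
    intro i
    rw [hμ', hA i Q, Finset.sum_sub_distrib, smul_sub]
    abel
  have hnd : ∀ i : Fin m, ‖μ - ω i Q‖ ≤ η * (B * (Q * U)) := by
    intro i
    rw [hdiff i, norm_smul, Real.norm_eq_abs, abs_of_nonneg hη]
    refine mul_le_mul_of_nonneg_left ?_ hη
    calc ‖∑ q ∈ Finset.range Q, (f' i (ω i q) - gbar q)‖
        ≤ ∑ q ∈ Finset.range Q, ‖f' i (ω i q) - gbar q‖ := norm_sum_le _ _
      _ ≤ ∑ q ∈ Finset.range Q, B * U := by
          refine Finset.sum_le_sum fun q hq => ?_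
          rw [norm_sub_rev]
          exact le_trans (hclu i q (Finset.mem_range.mp hq))
            (mul_le_mul_of_nonneg_left (hgU q) hB)
      _ = B * (Q * U) := by rw [Finset.sum_const, Finset.card_range]; push_cast; ring
  -- per-client bound
  have hterm : ∀ i : Fin m, f i μ - f i (ω i Q) ≤ η * B * Q * U ^ 2 := by
    intro i
    have h1 := convex_grad_le (hconv i) (hgrad i μ) (ω i Q)
    have h2 : (inner ℝ (f' i μ) (μ - ω i Q) : ℝ)
        = -(inner ℝ (f' i μ) (ω i Q - μ) : ℝ) := by
      rw [← inner_neg_right]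
      congr 1
      abel
    have h3 : (inner ℝ (f' i μ) (μ - ω i Q) : ℝ) ≤ ‖f' i μ‖ * ‖μ - ω i Q‖ :=
      real_inner_le_norm _ _
    have h4 : ‖f' i μ‖ * ‖μ - ω i Q‖ ≤ U * (η * (B * (Q * U))) := by
      exact mul_le_mul (hbdd i μ) (hnd i) (norm_nonneg _) hU
    nlinarith [h1, h2, h3, h4]
  -- conclude
  have hsum : ∑ i, lam i * (f i μ - f i (ω i Q)) ≤ Λ * (η * B * Q * U ^ 2) := by
    rw [hΛdef, Finset.sum_mul]
    exact Finset.sum_le_sum fun i _ =>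
      mul_le_mul_of_nonneg_left (hterm i) (hlam i).le
  calc Λ⁻¹ * ∑ i, lam i * (f i μ - f i (ω i Q))
      ≤ Λ⁻¹ * (Λ * (η * B * Q * U ^ 2)) :=
        mul_le_mul_of_nonneg_left hsum (inv_pos.mpr hΛ).le
    _ = η * B * Q * U ^ 2 := by field_simp
end
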